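/- Let M, N be topological spaces, π : M → N a continuous open surjection, and Φ, Ψ control flows on M and N respectively with π ∘ Φ_{t,u} = Ψ_{t,u} ∘ π (the flow on N is induced). Let C ⊆ M be a set on which approximate controllability holds: C ⊆ cl(A_M(x)) for all x ∈ C, where A_M(x) is the reachable set in M. Then π(C) ⊆ cl(A_N(π(x))) for all x ∈ C; in particular π(C) satisfies approximate controllability for the induced system and hence is contained in a control set of the induced system, and if C has nonempty interior so does π(C). -/

import Mathlib

/-- If `π : M → N` is a continuous open surjection intertwining control flows `Φ` and
`Ψ`, and approximate controllability holds on `C ⊆ M`, then it holds on `π(C)` for the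
induced system; moreover `π(C)` has nonempty interior if `C` does. -/
theorem stmt_19 {M N U : Type*} [TopologicalSpace M] [TopologicalSpace N]
    (π : M → N) (hπc : Continuous π) (hπo : IsOpenMap π) (hπs : Function.Surjective π)
    (Φ : ℝ → U → M → M) (Ψ : ℝ → U → N → N)
    (hcomm : ∀ t : ℝ, ∀ u : U, ∀ x : M, π (Φ t u x) = Ψ t u (π x))
    (C : Set M)
    (hC : ∀ x ∈ C, C ⊆ closure {y | ∃ t > (0 : ℝ), ∃ u : U, Φ t u x = y}) :
    (∀ y ∈ π '' C, π '' C ⊆ closure {z | ∃ t > (0 : ℝ), ∃ u : U, Ψ t u y = z}) ∧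
    ((interior C).Nonempty → (interior (π '' C)).Nonempty) := by
  constructor
  · rintro y ⟨x, hx, rfl⟩ z ⟨w, hw, rfl⟩
    have h1 : w ∈ closure {y | ∃ t > (0 : ℝ), ∃ u : U, Φ t u x = y} := hC x hx hw
    have h2 : π w ∈ closure (π '' {y | ∃ t > (0 : ℝ), ∃ u : U, Φ t u x = y}) := by
      exact image_closure_subset_closure_image hπc ⟨w, h1, rfl⟩
    refine closure_mono ?_ h2
    rintro _ ⟨v, ⟨t, ht, u, rfl⟩, rfl⟩
    exact ⟨t, ht, u, (hcomm t u x).symm⟩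
  · rintro ⟨x, hx⟩
    exact ⟨π x, interior_maximal (Set.image_mono interior_subset) (hπo _ isOpen_interior) ⟨x, hx, rfl⟩⟩
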